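/- Suppose n ≥ 3 and V has finite dimension d over K with d > n. Then no alternating n-linear form on V is non-degenerate: for every alternating n-linear form f on V the induced linear map Ψ : ⋀^{n-1} V → V* is not injective, i.e., there exists a nonzero t ∈ ⋀^{n-1} V with ⟨t, w⟩₂ = 0 for all w ∈ V. -/

import Mathlib

/-!
Statement 1: Suppose `n ≥ 3` (here `n = m + 1`, so `m ≥ 2`) and `V` has finite
dimension `d > n` over `K`. Then no alternating `n`-linear form on `V` is
non-degenerate: for every alternating `n`-linear form `f` on `V` (with induced
pairing `B`), the map `Ψ : ⋀^{n-1} V → V*` is not injective, i.e. there is a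
nonzero `t ∈ ⋀^{n-1} V` with `⟨t, w⟩₂ = 0` for all `w ∈ V`.
-/

variable {K : Type*} [Field K] {V : Type*} [AddCommGroup V] [Module K V]

/-- The pure wedge `v₁ ∧ ⋯ ∧ v_m` as an element of the `m`-th exterior power. -/
noncomputable def wedge (m : ℕ) (v : Fin m → V) : ⋀[K]^m V :=
  ⟨ExteriorAlgebra.ιMulti K m v, ExteriorAlgebra.ιMulti_range K m (Set.mem_range_self v)⟩

/-- `B` is the bilinear pairing `⋀^m V × V → K` induced by the alternating
`(m+1)`-linear form `f`, determined on pure wedges by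
`⟨v₁ ∧ ⋯ ∧ v_m, w⟩₂ = f (v₁, …, v_m, w)`. -/
def IsInducedPairing (m : ℕ) (f : V [⋀^Fin (m+1)]→ₗ[K] K)
    (B : ⋀[K]^m V →ₗ[K] V →ₗ[K] K) : Prop :=
  ∀ (v : Fin m → V) (w : V), B (wedge m v) w = f (Fin.snoc v w)

private lemma nat_le_choose : ∀ d m : ℕ, 1 ≤ m → m < d → d ≤ d.choose m := by
  intro d
  induction d with
  | zero => omega
  | succ d ih =>
    intro m h1 h2
    rcases Nat.lt_or_ge m 2 with h | h
    · interval_cases m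
      simp
    · obtain ⟨k, rfl⟩ : ∃ k, m = k + 1 := ⟨m - 1, by omega⟩
      rw [Nat.choose_succ_succ]
      simp only [Nat.succ_eq_add_one]
      have h3 := ih k (by omega) (by omega)
      have h4 : 0 < d.choose (k + 1) := Nat.choose_pos (by omega)
      omega

private lemma nat_lt_choose {m d : ℕ} (hm : 2 ≤ m) (hd : m + 1 < d) : d < d.choose m := by
  obtain ⟨k, rfl⟩ : ∃ k, m = k + 1 := ⟨m - 1, by omega⟩
  obtain ⟨e, rfl⟩ : ∃ e, d = e + 1 := ⟨d - 1, by omega⟩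
  rw [Nat.choose_succ_succ]
  simp only [Nat.succ_eq_add_one]
  have h1 := nat_le_choose e k (by omega) (by omega)
  have h2 := nat_le_choose e (k + 1) (by omega) (by omega)
  omega

theorem statement1 (m : ℕ) (hm : 2 ≤ m) (d : ℕ)
    [FiniteDimensional K V] (hdim : Module.finrank K V = d) (hd : m + 1 < d)
    (f : V [⋀^Fin (m+1)]→ₗ[K] K) (B : ⋀[K]^m V →ₗ[K] V →ₗ[K] K)
    (hB : IsInducedPairing m f B) :
    ¬ Function.Injective B ∧
      ∃ t : ⋀[K]^m V, t ≠ 0 ∧ ∀ w : V, B t w = 0 := by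
  classical
  have key : ¬ Function.Injective B := by
    intro hinj
    obtain ⟨b⟩ : Nonempty (Module.Basis (Fin d) K V) :=
      ⟨Module.finBasisOfFinrankEq K V hdim⟩
    let I := {s : Finset (Fin d) // s.card = m}
    let σ : I → Fin m → Fin d := fun S i => (S.1.orderIsoOfFin S.2 i : Fin d)
    let e : I → Fin m → V := fun S i => b (σ S i)
    let φ : I → (V [⋀^Fin m]→ₗ[K] K) := fun S =>
      Matrix.detRowAlternating.compLinearMap (LinearMap.pi fun j => b.coord (σ S j))
    let Φ : I → ExteriorAlgebra K V →ₗ[K] K := fun S =>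
      ExteriorAlgebra.liftAlternating
        (Function.update (fun i => (0 : V [⋀^Fin i]→ₗ[K] K)) m (φ S))
    have hmem : ∀ (S : I) (i : Fin m), σ S i ∈ S.1 := fun S i => (S.1.orderIsoOfFin S.2 i).2
    have hφ : ∀ S T : I, φ S (e T) = if S = T then 1 else 0 := by
      intro S T
      have hcoord : ∀ (j i : Fin d), b.coord j (b i) = if i = j then 1 else 0 := by
        intro j i
        rw [Module.Basis.coord_apply, Module.Basis.repr_self, Finsupp.single_apply]
      show Matrix.detRowAlternating (fun i => LinearMap.pi (fun j => b.coord (σ S j)) (e T i))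
          = _
      have hA : (fun i => LinearMap.pi (fun j => b.coord (σ S j)) (e T i))
          = fun i j => if σ T i = σ S j then (1 : K) else 0 := by
        funext i j
        simp [LinearMap.pi_apply, e, hcoord]
      rw [hA]
      split_ifs with hST
      · subst hST
        have : (fun i j => if σ S i = σ S j then (1 : K) else 0) = (1 : Matrix (Fin m) (Fin m) K) := by
          funext i j
          have hinj : σ S i = σ S j ↔ i = j := by
            constructor
            · intro h
              exact (S.1.orderIsoOfFin S.2).injective (Subtype.ext h)
            · rintro rfl; rfl
          simp [Matrix.one_apply, hinj]
        rw [this]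
        exact Matrix.det_one
      · obtain ⟨x, hxS, hxT⟩ : ∃ x ∈ S.1, x ∉ T.1 := by
          by_contra hsub
          push_neg at hsub
          exact hST (Subtype.ext (Finset.eq_of_subset_of_card_le hsub (by rw [S.2, T.2])))
        obtain ⟨j₀, hj₀⟩ : ∃ j₀, σ S j₀ = x :=
          ⟨(S.1.orderIsoOfFin S.2).symm ⟨x, hxS⟩,
            congrArg Subtype.val ((S.1.orderIsoOfFin S.2).apply_symm_apply ⟨x, hxS⟩)⟩
        apply Matrix.det_eq_zero_of_column_eq_zero j₀
        intro i
        have : σ T i ≠ σ S j₀ := by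
          rw [hj₀]
          intro h
          exact hxT (h ▸ hmem T i)
        simp [this]
    have hΦ : ∀ S T : I,
        Φ S ((wedge m (e T) : ⋀[K]^m V) : ExteriorAlgebra K V) = if S = T then 1 else 0 := by
      intro S T
      show Φ S (ExteriorAlgebra.ιMulti K m (e T)) = _
      rw [show Φ S = ExteriorAlgebra.liftAlternating
        (Function.update (fun i => (0 : V [⋀^Fin i]→ₗ[K] K)) m (φ S)) from rfl,
        ExteriorAlgebra.liftAlternating_apply_ιMulti, Function.update_self]
      exact hφ S T
    have hw : LinearIndependent K (fun S : I => (wedge m (e S) : ⋀[K]^m V)) := by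
      rw [Fintype.linearIndependent_iff]
      intro g hg S
      have h1 := congrArg (fun t : ⋀[K]^m V => Φ S ((t : ExteriorAlgebra K V))) hg
      simp only [AddSubmonoidClass.coe_finset_sum, Submodule.coe_smul, map_sum, map_smul, hΦ,
        ZeroMemClass.coe_zero, map_zero, smul_eq_mul, mul_ite, mul_one, mul_zero,
        Finset.sum_ite_eq, Finset.mem_univ, if_true] at h1
      rw [Finset.sum_eq_single S (fun b _ hb => if_neg (Ne.symm hb)) (by simp)] at h1
      simpa using h1
    have h1 : LinearIndependent K (⇑B ∘ fun S : I => (wedge m (e S) : ⋀[K]^m V)) :=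
      hw.map' B (LinearMap.ker_eq_bot.mpr hinj)
    have h2 := h1.fintype_card_le_finrank
    have h3 : Fintype.card I = d.choose m := by
      rw [Fintype.card_finset_len, Fintype.card_fin]
    have h4 : Module.finrank K (V →ₗ[K] K) = d := hdim ▸ Subspace.dual_finrank_eq
    rw [h3, h4] at h2
    exact absurd h2 (not_le.mpr (nat_lt_choose hm hd))
  obtain ⟨a, b', hab, hne⟩ := Function.not_injective_iff.mp key
  refine ⟨key, a - b', sub_ne_zero.mpr hne, fun w => ?_⟩
  simp [map_sub, hab]
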